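/- The extended inner angle map θ̃ : ℝ_{>0}³ → [0,π]³ is continuous, where θ̃(l) is the triple of inner angles of the Euclidean triangle with side lengths l if l satisfies the strict triangle inequalities, and θ̃_i = π, θ̃_j = θ̃_k = 0 if l_i ≥ l_j + l_k. -/
import Mathlib


/-- The two indices of `Fin 3` other than the given one. -/
def others : Fin 3 → Fin 3 × Fin 3
  | 0 => (1, 2)
  | 1 => (0, 2)
  | 2 => (0, 1)

/-- `l` satisfies the strict triangle inequalities. -/
def IsTriangle (l : Fin 3 → ℝ) : Prop :=
  l 0 < l 1 + l 2 ∧ l 1 < l 0 + l 2 ∧ l 2 < l 0 + l 1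

open Classical in
/-- The extended inner angle at vertex `i` of the (generalized) triangle with side
lengths `l` (`l i` is the side opposite vertex `i`): given by the law of cosines for
genuine triangles, and `π` (resp. `0`) at the vertex whose opposite side is too long
(resp. at the other two vertices) for degenerate ones. -/
noncomputable def extAng (l : Fin 3 → ℝ) (i : Fin 3) : ℝ :=
  let j := (others i).1
  let k := (others i).2
  if IsTriangle l then
    Real.arccos ((l j ^ 2 + l k ^ 2 - l i ^ 2) / (2 * l j * l k))
  else if l j + l k ≤ l i then Real.pi
  else 0

theorem extAng_continuousOn :
    ContinuousOn (fun l : Fin 3 → ℝ => fun i => extAng l i)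
      {l : Fin 3 → ℝ | ∀ i, 0 < l i} := by
  apply continuousOn_pi.2
  intro i
  have hi3 : i = 0 ∨ i = 1 ∨ i = 2 := by omega
  have key : ∀ l : Fin 3 → ℝ, (∀ i, 0 < l i) →
      extAng l i = Real.arccos ((l (others i).1 ^ 2 + l (others i).2 ^ 2 - l i ^ 2) /
        (2 * l (others i).1 * l (others i).2)) := by
    intro l hl
    have h0 := hl 0; have h1 := hl 1; have h2 := hl 2
    unfold extAng
    simp only
    split_ifs with ht hd
    · rfl
    · rw [Real.arccos_of_le_neg_one]
      rcases hi3 with rfl | rfl | rfl <;>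
        simp only [others] at hd ⊢ <;>
        rw [div_le_iff₀ (by positivity)] <;> nlinarith
    · rw [Real.arccos_of_one_le]
      simp only [IsTriangle, not_and_or, not_lt] at ht
      push_neg at hd
      rcases hi3 with rfl | rfl | rfl <;>
        simp only [others] at hd ⊢ <;>
        rw [le_div_iff₀ (by positivity)] <;>
        rcases ht with h | h | h <;> nlinarith
  apply ContinuousOn.congr _ (fun l hl => key l hl)
  apply Real.continuous_arccos.comp_continuousOn
  apply ContinuousOn.div
  · fun_prop
  · fun_prop
  · intro l hl
    have := hl (others i).1; have := hl (others i).2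
    positivity
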